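/- Let μ be a probability measure on [-1,1] with orthonormal polynomial basis {p̃_i} (with respect to a measure η(t)dμ, after weighting by a continuous nonnegative function η) satisfying the three-term recurrence p̃_{n+1}(t) = (ã_{n+1} t + b̃_{n+1}) p̃_n(t) − c̃_{n+1} p̃_{n−1}(t) with ã_{n+1} > 0. Fix s ∈ (−1,1) and coefficients λ_0,...,λ_{d−1}. Define g(t) = (t−s) η(t) (Σ_{i=0}^{d−1} (λ_i/(t−s)) det[[p̃_{i+1}(t), p̃_{i+1}(s)],[p̃_i(t), p̃_i(s)]])². Then the zeroth Fourier coefficient g_0 = ∫_{−1}^1 g dμ equals − Σ_{j=0}^{d−1} ã_{j+1} p̃_j(s) p̃_{j+1}(s) λ_j². -/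

import Mathlib

open MeasureTheory Polynomial

theorem aux_span (ptil : ℕ → Polynomial ℝ)
    (hdeg : ∀ i, (ptil i).natDegree = i)
    (hne : ∀ i, ptil i ≠ 0) :
    ∀ n (r : Polynomial ℝ), r.natDegree ≤ n →
      ∃ f : ℕ → ℝ, r = ∑ k ∈ Finset.range (n + 1), C (f k) * ptil k := by
  intro n
  induction n with
  | zero =>
    intro r hr
    refine ⟨fun _ => r.coeff 0 / (ptil 0).coeff 0, ?_⟩
    obtain ⟨c0, hc0⟩ := Polynomial.natDegree_eq_zero.mp (hdeg 0)
    obtain ⟨r0, hr0⟩ := Polynomial.natDegree_eq_zero.mp (Nat.le_zero.mp hr)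
    have hc0ne : c0 ≠ 0 := by
      intro h; apply hne 0; rw [← hc0, h, map_zero]
    simp [← hc0, ← hr0, ← C_mul, div_mul_cancel₀ _ hc0ne]
  | succ n ih =>
    intro r hr
    set lc := (ptil (n + 1)).leadingCoeff with hlc
    have hlcne : lc ≠ 0 := leadingCoeff_ne_zero.mpr (hne (n + 1))
    have hcoeff : (ptil (n + 1)).coeff (n + 1) = lc := by
      have := Polynomial.coeff_natDegree (p := ptil (n + 1))
      rwa [hdeg] at this
    set r' := r - C (r.coeff (n + 1) / lc) * ptil (n + 1) with hr'
    have hdr' : r'.natDegree ≤ n := by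
      rw [Polynomial.natDegree_le_iff_coeff_eq_zero]
      intro m hm
      rcases eq_or_lt_of_le (Nat.succ_le_of_lt hm) with h | h
      · rw [hr', coeff_sub, coeff_C_mul, ← h, hcoeff, div_mul_cancel₀ _ hlcne, sub_self]
      · have h1 : r.coeff m = 0 := coeff_eq_zero_of_natDegree_lt (lt_of_le_of_lt hr h)
        have h2 : (ptil (n+1)).coeff m = 0 := coeff_eq_zero_of_natDegree_lt (by rw [hdeg]; exact h)
        simp [hr', coeff_sub, coeff_C_mul, h1, h2]
    obtain ⟨f, hf⟩ := ih r' hdr'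
    refine ⟨fun k => if k = n + 1 then r.coeff (n + 1) / lc else f k, ?_⟩
    rw [Finset.sum_range_succ]
    have hre : r = r' + C (r.coeff (n + 1) / lc) * ptil (n + 1) := by rw [hr']; ring
    conv_lhs => rw [hre, hf]
    congr 1
    · exact Finset.sum_congr rfl fun k hk => by
        beta_reduce
        rw [if_neg (by have := Finset.mem_range.mp hk; omega)]
    · beta_reduce
      rw [if_pos rfl]

theorem aux_sum_swap {M : Type*} [AddCommMonoid M] (d : ℕ) (f : ℕ → ℕ → M) :
    ∑ i ∈ Finset.range d, ∑ k ∈ Finset.range (i + 1), f i k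
      = ∑ k ∈ Finset.range d, ∑ i ∈ Finset.Ico k d, f i k := by
  induction d with
  | zero => simp
  | succ d ih =>
    rw [Finset.sum_range_succ, ih, Finset.sum_range_succ (fun k => ∑ i ∈ Finset.Ico k (d+1), f i k)]
    have h1 : ∀ k ∈ Finset.range d, ∑ i ∈ Finset.Ico k (d+1), f i k
        = (∑ i ∈ Finset.Ico k d, f i k) + f d k := by
      intro k hk
      rw [Finset.sum_Ico_succ_top (le_of_lt (Finset.mem_range.mp hk))]
    rw [Finset.sum_congr rfl h1, Finset.sum_add_distrib]
    have h2 : ∑ i ∈ Finset.Ico d (d+1), f i d = f d d := by simp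
    rw [h2, Finset.sum_range_succ (fun k => f d k)]
    abel

theorem zeroth_fourier_coefficient (μ : Measure ℝ) [IsProbabilityMeasure μ]
    (hsupp : μ (Set.Icc (-1 : ℝ) 1)ᶜ = 0)
    (η : ℝ → ℝ) (hηc : Continuous η) (hη : ∀ t, 0 ≤ η t)
    (ptil : ℕ → Polynomial ℝ)
    (hdeg : ∀ i, (ptil i).natDegree = i)
    (hone : ∀ i, 0 < (ptil i).eval 1)
    (horth : ∀ i j, ∫ t, (ptil i).eval t * (ptil j).eval t * η t ∂μ =
      if i = j then 1 else 0)
    (a b c : ℕ → ℝ) (ha : ∀ i, 0 < a (i + 1))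
    (hlead : ∀ i : ℕ, a (i + 1) = (ptil (i + 1)).leadingCoeff / (ptil i).leadingCoeff)
    (hrec : ∀ i : ℕ, ptil (i + 2) =
      (C (a (i + 2)) * X + C (b (i + 2))) * ptil (i + 1) - C (c (i + 2)) * ptil i)
    (s : ℝ) (hs : s ∈ Set.Ioo (-1 : ℝ) 1)
    (d : ℕ) (lam : ℕ → ℝ) (q : Polynomial ℝ)
    (hq : (X - C s) * q =
      ∑ i ∈ Finset.range d, C (lam i) *
        (ptil (i + 1) * C ((ptil i).eval s) - C ((ptil (i + 1)).eval s) * ptil i)) :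
    ∫ t, (t - s) * η t * (q.eval t) ^ 2 ∂μ =
      -∑ j ∈ Finset.range d,
        a (j + 1) * (ptil j).eval s * (ptil (j + 1)).eval s * lam j ^ 2 := by
  -- basic facts
  have hne : ∀ i, ptil i ≠ 0 := by
    intro i h
    have := hone i
    rw [h] at this
    simp at this
  have hlcne : ∀ i, (ptil i).leadingCoeff ≠ 0 := fun i => leadingCoeff_ne_zero.mpr (hne i)
  have hco : ∀ i, (ptil i).coeff i = (ptil i).leadingCoeff := by
    intro i
    have := Polynomial.coeff_natDegree (p := ptil i)
    rwa [hdeg] at this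
  -- integrability
  have hintp : ∀ p : Polynomial ℝ, Integrable (fun t => p.eval t * η t) μ := by
    intro p
    have hc : Continuous (fun t => p.eval t * η t) := p.continuous_aeval.mul hηc
    obtain ⟨Cb, hCb⟩ :=
      (isCompact_Icc (a := (-1:ℝ)) (b := 1)).exists_bound_of_continuousOn hc.continuousOn
    have hae : ∀ᵐ t ∂μ, t ∈ Set.Icc (-1:ℝ) 1 := by
      rw [ae_iff]
      convert hsupp using 2
      rfl
    exact Integrable.mono' (integrable_const Cb) hc.aestronglyMeasurable
      (hae.mono fun t ht => hCb t ht)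
  -- the linear functional J
  set J : Polynomial ℝ → ℝ := fun w => ∫ t, w.eval t * η t ∂μ with hJ
  have Jadd : ∀ u v : Polynomial ℝ, J (u + v) = J u + J v := by
    intro u v
    simp only [hJ]
    rw [show (fun t => (u + v).eval t * η t) = fun t => u.eval t * η t + v.eval t * η t from
      funext fun t => by simp [add_mul]]
    exact integral_add (hintp u) (hintp v)
  have Jsub : ∀ u v : Polynomial ℝ, J (u - v) = J u - J v := by
    intro u v
    simp only [hJ]
    rw [show (fun t => (u - v).eval t * η t) = fun t => u.eval t * η t - v.eval t * η t from
      funext fun t => by simp [sub_mul]]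
    exact integral_sub (hintp u) (hintp v)
  have JC : ∀ (x : ℝ) (u : Polynomial ℝ), J (C x * u) = x * J u := by
    intro x u
    simp only [hJ]
    rw [show (fun t => (C x * u).eval t * η t) = fun t => x * (u.eval t * η t) from
      funext fun t => by simp; ring]
    exact integral_const_mul x _
  have Jsum : ∀ (T : Finset ℕ) (g : ℕ → Polynomial ℝ),
      J (∑ i ∈ T, g i) = ∑ i ∈ T, J (g i) := by
    intro T g
    simp only [hJ]
    rw [show (fun t => (∑ i ∈ T, g i).eval t * η t) = fun t => ∑ i ∈ T, (g i).eval t * η t from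
      funext fun t => by rw [eval_finset_sum, Finset.sum_mul]]
    exact integral_finset_sum T fun i _ => hintp (g i)
  have Jorth : ∀ i j, J (ptil i * ptil j) = if i = j then 1 else 0 := by
    intro i j
    simp only [hJ, eval_mul]
    exact horth i j
  -- orthogonality to lower degrees
  have Jlow : ∀ n (r : Polynomial ℝ) m, r.natDegree ≤ n → n < m → J (r * ptil m) = 0 := by
    intro n r m hr hnm
    obtain ⟨f, hf⟩ := aux_span ptil hdeg hne n r hr
    rw [hf, Finset.sum_mul, Jsum]
    apply Finset.sum_eq_zero
    intro k hk
    rw [mul_assoc, JC, Jorth, if_neg (by have := Finset.mem_range.mp hk; omega), mul_zero]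
  -- ⟨X p_i, p_{i+1}⟩ = 1 / a (i+1)
  have hI : ∀ i, J ((X * ptil i) * ptil (i + 1)) = 1 / a (i + 1) := by
    intro i
    set α := (ptil i).leadingCoeff / (ptil (i + 1)).leadingCoeff with hα
    have hα1 : α = 1 / a (i + 1) := by rw [hlead i, one_div_div]
    have hu : (X * ptil i - C α * ptil (i + 1)).natDegree ≤ i := by
      rw [Polynomial.natDegree_le_iff_coeff_eq_zero]
      intro m hm
      obtain ⟨m₀, rfl⟩ : ∃ m₀, m = m₀ + 1 := ⟨m - 1, by omega⟩
      rw [coeff_sub, coeff_X_mul, coeff_C_mul]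
      rcases eq_or_lt_of_le (Nat.lt_succ_iff.mp hm) with h | h
      · rw [← h, hco, hco, hα, div_mul_cancel₀ _ (hlcne (i + 1)), sub_self]
      · rw [coeff_eq_zero_of_natDegree_lt (by rw [hdeg]; exact h),
          coeff_eq_zero_of_natDegree_lt (by rw [hdeg]; omega)]
        ring
    have hsplit : X * ptil i = (X * ptil i - C α * ptil (i + 1)) + C α * ptil (i + 1) := by ring
    rw [hsplit, add_mul, Jadd, Jlow i _ (i + 1) hu (Nat.lt_succ_self i), mul_assoc, JC,
      Jorth, if_pos rfl, mul_one, zero_add, hα1]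
  -- recurrence coefficient identity
  have hca : ∀ i, c (i + 2) * a (i + 1) = a (i + 2) := by
    intro i
    have h0 : J (ptil (i + 2) * ptil i) = 0 := by
      rw [Jorth, if_neg (by omega)]
    have hexp : ptil (i + 2) * ptil i =
        C (a (i + 2)) * ((X * ptil i) * ptil (i + 1)) + C (b (i + 2)) * (ptil (i + 1) * ptil i)
          - C (c (i + 2)) * (ptil i * ptil i) := by
      rw [hrec i]; ring
    rw [hexp, Jsub, Jadd, JC, JC, JC, hI, Jorth, Jorth, if_neg (by omega), if_pos rfl] at h0
    have hane : a (i + 1) ≠ 0 := ne_of_gt (ha i)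
    field_simp at h0
    linarith
  -- Christoffel–Darboux
  set K : ℕ → Polynomial ℝ := fun i => ∑ k ∈ Finset.range (i + 1), C ((ptil k).eval s) * ptil k
    with hK
  have hCD : ∀ i, ptil (i + 1) * C ((ptil i).eval s) - C ((ptil (i + 1)).eval s) * ptil i
      = C (a (i + 1)) * ((X - C s) * K i) := by
    intro i
    induction i with
    | zero =>
      obtain ⟨c0, hc0⟩ := Polynomial.natDegree_eq_zero.mp (hdeg 0)
      have hp1 : ptil 1 = C ((ptil 1).coeff 1) * X + C ((ptil 1).coeff 0) :=
        eq_X_add_C_of_natDegree_le_one (le_of_eq (hdeg 1))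
      have hc0ne : c0 ≠ 0 := by
        intro h; apply hne 0; rw [← hc0, h, map_zero]
      have hlc0 : (ptil 0).leadingCoeff = c0 := by
        rw [← hco 0, ← hc0]; simp
      have ha1 : a 1 * c0 = (ptil 1).coeff 1 := by
        rw [hlead 0, hlc0, ← hco 1, div_mul_cancel₀ _ hc0ne]
      apply Polynomial.funext
      intro t
      simp only [hK, zero_add, Finset.sum_range_one, eval_mul, eval_sub, eval_add, eval_C,
        eval_X]
      rw [← hc0, hp1]
      simp only [eval_mul, eval_add, eval_C, eval_X]
      linear_combination (s - t) * c0 * ha1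
    | succ i ih =>
      show ptil (i + 2) * C ((ptil (i + 1)).eval s) - C ((ptil (i + 2)).eval s) * ptil (i + 1)
        = C (a (i + 2)) * ((X - C s) * K (i + 1))
      apply Polynomial.funext
      intro t
      have iht := congrArg (Polynomial.eval t) ih
      simp only [hK, eval_mul, eval_sub, eval_C, eval_X, eval_finset_sum] at iht ⊢
      rw [Finset.sum_range_succ]
      have hrt := congrArg (Polynomial.eval t) (hrec i)
      have hrs := congrArg (Polynomial.eval s) (hrec i)
      simp only [eval_mul, eval_sub, eval_add, eval_C, eval_X] at hrt hrs
      rw [hrt, hrs]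
      linear_combination c (i + 2) * iht +
        (t - s) * (∑ k ∈ Finset.range (i + 1), eval s (ptil k) * eval t (ptil k)) * (hca i)
  -- expansion of q
  set S : ℕ → ℝ := fun k => ∑ i ∈ Finset.Ico k d, lam i * a (i + 1) with hS
  have hq2 : q = ∑ i ∈ Finset.range d, C (lam i * a (i + 1)) * K i := by
    apply mul_left_cancel₀ (X_sub_C_ne_zero s)
    rw [hq, Finset.mul_sum]
    refine Finset.sum_congr rfl fun i _ => ?_
    rw [hCD i, C_mul]
    ring
  have hqq : q = ∑ k ∈ Finset.range d, C ((ptil k).eval s * S k) * ptil k := by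
    rw [hq2]
    have h1 : ∀ i ∈ Finset.range d, C (lam i * a (i + 1)) * K i
        = ∑ k ∈ Finset.range (i + 1), C (lam i * a (i + 1)) * (C ((ptil k).eval s) * ptil k) := by
      intro i _
      rw [hK, Finset.mul_sum]
    rw [Finset.sum_congr rfl h1,
      aux_sum_swap d (fun i k => C (lam i * a (i + 1)) * (C ((ptil k).eval s) * ptil k))]
    refine Finset.sum_congr rfl fun k _ => ?_
    have hSk : ∑ x ∈ Finset.Ico k d, lam x * a (x + 1) = S k := rfl
    rw [← Finset.sum_mul, ← map_sum, hSk, ← mul_assoc, ← C_mul, mul_comm (S k)]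
  -- inner products with q
  have hJq : ∀ j, J (ptil j * q) = (ptil j).eval s * S j := by
    intro j
    have h1 : ptil j * q = ∑ k ∈ Finset.range d,
        C ((ptil k).eval s * S k) * (ptil j * ptil k) := by
      rw [hqq, Finset.mul_sum]
      exact Finset.sum_congr rfl fun k _ => by ring
    rw [h1, Jsum]
    simp only [JC, Jorth, mul_ite, mul_one, mul_zero]
    rw [Finset.sum_ite_eq]
    by_cases hjd : j ∈ Finset.range d
    · rw [if_pos hjd]
    · rw [if_neg hjd]
      have : Finset.Ico j d = ∅ :=
        Finset.Ico_eq_empty (by rw [Finset.mem_range] at hjd; omega)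
      rw [hS]
      simp only [this, Finset.sum_empty, mul_zero]
  -- the main computation
  have key : ∫ t, (t - s) * η t * (q.eval t) ^ 2 ∂μ = J ((X - C s) * q * q) := by
    simp only [hJ]
    congr 1
    funext t
    simp only [eval_mul, eval_sub, eval_C, eval_X]
    ring
  rw [key]
  have h2 : (X - C s) * q * q = ∑ i ∈ Finset.range d, C (lam i) *
      ((ptil (i + 1) * C ((ptil i).eval s) - C ((ptil (i + 1)).eval s) * ptil i) * q) := by
    rw [hq, Finset.sum_mul]
    exact Finset.sum_congr rfl fun i _ => by ring
  rw [h2, Jsum, ← Finset.sum_neg_distrib]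
  refine Finset.sum_congr rfl fun i hi => ?_
  have hsplit : (ptil (i + 1) * C ((ptil i).eval s) - C ((ptil (i + 1)).eval s) * ptil i) * q
      = C ((ptil i).eval s) * (ptil (i + 1) * q) - C ((ptil (i + 1)).eval s) * (ptil i * q) := by
    ring
  rw [JC, hsplit, Jsub, JC, JC, hJq, hJq]
  have hSi : S i = lam i * a (i + 1) + S (i + 1) := by
    rw [hS]
    exact Finset.sum_eq_sum_Ico_succ_bot (Finset.mem_range.mp hi) _
  rw [hSi]
  ring
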